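/- arXiv:2106.15311 — 2 statements merged into one kernel-verified Lean document; each statement's English description precedes it below -/
import Mathlib

section
/- For every reachable state s of a set automaton and every function symbol f, every dependency-equivalence class K of the derivative deriv(s,f) contains a match goal whose match announcement position equals gcp(K), the greatest common prefix of the announcement positions in K. -/
/-- A position is a finite list of positive natural numbers. -/
abbrev Pos : Type := List ℕ+

/-- `below p q` (written `p ≤ q` in the paper) holds iff `q` is a prefix of `p`. -/
def below (p q : Pos) : Prop := ∃ q'' : Pos, p = q ++ q''

/-- Terms over a signature `F`, with a single variable `ω` (patterns are linear). -/
inductive Tm (F : Type) : Type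
  | var : Tm F
  | app : F → List (Tm F) → Tm F

variable {F : Type}

/-- Head symbol of a term (none for the variable). -/
def hd : Tm F → Option F
  | .var => none
  | .app f _ => some f

/-- The subterm of `t` at position `p`, if `p` is in the domain of `t`. -/
def subtermAt : Tm F → Pos → Option (Tm F)
  | t, [] => some t
  | .var, _ :: _ => none
  | .app _ ts, i :: p => (ts[(i : ℕ) - 1]?).bind (fun u => subtermAt u p)

/-- The domain (set of positions) of a term. -/
def Dom (t : Tm F) : Set Pos := {p | (subtermAt t p).isSome}

/-- `t` is a closed term: it contains no variable. -/
def Closed (t : Tm F) : Prop := ∀ p u, subtermAt t p = some u → u ≠ Tm.var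

/-- Terms that respect the arity function of the signature. -/
inductive WF (ar : F → ℕ) : Tm F → Prop
  | var : WF ar Tm.var
  | app : ∀ f ts, ts.length = ar f → (∀ u ∈ ts, WF ar u) → WF ar (Tm.app f ts)

/-- Pattern `ℓ` matches term `t` at position `p`: for every non-variable
position `p'` of `ℓ`, the head symbols of `t[p.p']` and `ℓ[p']` agree. -/
def Matches (ℓ t : Tm F) (p : Pos) : Prop :=
  ∀ p' u, subtermAt ℓ p' = some u → u ≠ Tm.var →
    ∃ v, subtermAt t (p ++ p') = some v ∧ hd v = hd u

/-- A match obligation: a set of (subpattern, position) pairs. -/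
abbrev Obl (F : Type) := Set (Tm F × Pos)
/-- A match goal: a match obligation together with a match announcement. -/
abbrev Goal (F : Type) := Obl F × (Tm F × Pos)
/-- A state of the set automaton: a set of match goals. -/
abbrev St (F : Type) := Set (Goal F)

/-- The positions of a match obligation. -/
def posOf (mo : Obl F) : Set Pos := {p | ∃ u, (u, p) ∈ mo}

/-- All match obligation positions of a state. -/
def posMO (s : St F) : Set Pos := {p | ∃ g ∈ s, p ∈ posOf g.1}

/-- Reduction of a match obligation after observing a symbol of arity `n`
at position `p`: pairs at other positions are kept, and the pair at `p` is
replaced by obligations for its non-variable arguments. -/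
def reduce (mo : Obl F) (n : ℕ) (p : Pos) : Obl F :=
  {x | x ∈ mo ∧ x.2 ≠ p} ∪
  {x | ∃ (ℓ u : Tm F) (i : ℕ+), (ℓ, p) ∈ mo ∧ (i : ℕ) ≤ n ∧
        subtermAt ℓ [i] = some u ∧ u ≠ Tm.var ∧ x = (u, p ++ [i])}

/-- The `f`-derivative of state `s` labelled with position `lab`:
unchanged goals, reduced goals and fresh goals. -/
def derivS (pats : Set (Tm F)) (ar : F → ℕ) (s : St F) (lab : Pos) (f : F) : St F :=
  {g | g ∈ s ∧ lab ∉ posOf g.1} ∪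
  {g | ∃ mo ma, (mo, ma) ∈ s ∧ (∃ ℓ, (ℓ, lab) ∈ mo ∧ hd ℓ = some f) ∧
        reduce mo (ar f) lab ≠ ∅ ∧ g = (reduce mo (ar f) lab, ma)} ∪
  {g | ∃ (ℓ : Tm F) (i : ℕ+), ℓ ∈ pats ∧ (i : ℕ) ≤ ar f ∧
        g = ({(ℓ, lab ++ [i])}, (ℓ, lab ++ [i]))}

/-- The direct dependency relation: the obligation position sets intersect. -/
def dirDep (g₁ g₂ : Goal F) : Prop := (posOf g₁.1 ∩ posOf g₂.1).Nonempty

/-- `K` is an equivalence class of `X` under the transitive closure of the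
direct dependency relation restricted to `X`. -/
def IsClass (X K : St F) : Prop :=
  ∃ g ∈ X, K = {g' | g' ∈ X ∧
    Relation.ReflTransGen (fun a b => a ∈ X ∧ b ∈ X ∧ dirDep a b) g g'}

/-- The match announcement positions of a set of goals. -/
def posMA (K : St F) : Set Pos := {p | ∃ mo ℓ, (mo, (ℓ, p)) ∈ K}

/-- `g` is the greatest common prefix (join) of the set of positions `P`. -/
def IsGcp (P : Set Pos) (g : Pos) : Prop :=
  (∀ p ∈ P, below p g) ∧ ∀ r : Pos, (∀ p ∈ P, below p r) → below g r

/-- Lift a match goal by stripping the common prefix `g` from all positions. -/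
def liftGoal (g : Pos) (x : Goal F) : Goal F :=
  ((fun y : Tm F × Pos => (y.1, y.2.drop g.length)) '' x.1,
   (x.2.1, x.2.2.drop g.length))

/-- Lift a set of match goals. -/
def liftSt (g : Pos) (K : St F) : St F := liftGoal g '' K

/-- The transition function of the set automaton: `(s', p') ∈ delta pats ar L s f`
iff `s'` is the lifting of a dependency class `K` of the derivative and `p'` is
the greatest common prefix of the announcement positions of `K`. -/
def delta (pats : Set (Tm F)) (ar : F → ℕ) (L : St F → Pos) (s : St F) (f : F) :
    Set (St F × Pos) :=
  {x | ∃ K, IsClass (derivS pats ar s (L s) f) K ∧ IsGcp (posMA K) x.2 ∧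
        x.1 = liftSt x.2 K}

/-- The initial state: all fresh root goals. -/
def initSt (pats : Set (Tm F)) : St F :=
  {g | ∃ ℓ ∈ pats, g = ({(ℓ, ([] : Pos))}, (ℓ, ([] : Pos)))}

/-- Reachable states of the set automaton. -/
inductive Reachable (pats : Set (Tm F)) (ar : F → ℕ) (L : St F → Pos) : St F → Prop
  | init : Reachable pats ar L (initSt pats)
  | step : ∀ s f s' p, Reachable pats ar L s →
      (s', p) ∈ delta pats ar L s f → Reachable pats ar L s'

/-- The labelling function `L` picks, for every reachable state, an obligation
position of one of its root goals. -/
def RootLabel (pats : Set (Tm F)) (ar : F → ℕ) (L : St F → Pos) : Prop :=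
  ∀ s, Reachable pats ar L s →
    ∃ mo ℓ, (mo, (ℓ, ([] : Pos))) ∈ s ∧ L s ∈ posOf mo

/-- The nodes of the evaluation tree `ET_M(t)`. -/
inductive Node (pats : Set (Tm F)) (ar : F → ℕ) (L : St F → Pos) (t : Tm F) :
    St F → Pos → Prop
  | root : Node pats ar L t (initSt pats) []
  | step : ∀ s p f s' p', Node pats ar L t s p →
      (∃ v, subtermAt t (p ++ L s) = some v ∧ hd v = some f) →
      (s', p') ∈ delta pats ar L s f →
      Node pats ar L t s' (p ++ p')

/-- The edges of the evaluation tree `ET_M(t)`. -/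
def EdgeRel (pats : Set (Tm F)) (ar : F → ℕ) (L : St F → Pos) (t : Tm F)
    (s : St F) (p : Pos) (s' : St F) (q : Pos) : Prop :=
  Node pats ar L t s p ∧ ∃ f p',
    (∃ v, subtermAt t (p ++ L s) = some v ∧ hd v = some f) ∧
    (s', p') ∈ delta pats ar L s f ∧ q = p ++ p'

/-- The work set `W(s,p)`: the positions of `t` below the position pointer that
still have to be inspected. -/
def Work (t : Tm F) (s : St F) (p : Pos) : Set Pos :=
  {x | ∃ q, x = p ++ q ∧ x ∈ Dom t ∧ ∃ r ∈ posMO s, below q r}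

/-- The output function: match announcements whose obligation is completed by
observing `f` at the label position. -/
def outS (ar : F → ℕ) (L : St F → Pos) (s : St F) (f : F) : Set (Tm F × Pos) :=
  {ma | ({(Tm.app f (List.replicate (ar f) Tm.var), L s)}, ma) ∈ s}

/-- `below` as list prefix. -/
lemma below_iff_prefix (p q : Pos) : below p q ↔ q <+: p :=
  ⟨fun ⟨r, h⟩ => ⟨r, h.symm⟩, fun ⟨r, h⟩ => ⟨r, h.symm⟩⟩

lemma below_refl (p : Pos) : below p p := ⟨[], (List.append_nil p).symm⟩

lemma below_trans {p q r : Pos} (h1 : below p q) (h2 : below q r) : below p r := by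
  rw [below_iff_prefix] at *
  exact h2.trans h1

/-- All obligation positions of every goal in `s` are below its announcement. -/
def AnnBound (s : St F) : Prop :=
  ∀ mo ℓ q, (mo, (ℓ, q)) ∈ s → ∀ p ∈ posOf mo, below p q

lemma annBound_init (pats : Set (Tm F)) : AnnBound (initSt pats) := by
  rintro mo ℓ q ⟨ℓ', _, heq⟩ p _
  obtain ⟨_, _, rfl⟩ : mo = {(ℓ', ([] : Pos))} ∧ ℓ = ℓ' ∧ q = [] := by
    simpa [Prod.ext_iff] using heq
  exact ⟨p, rfl⟩

lemma annBound_deriv {s : St F} (hs : AnnBound s) (pats : Set (Tm F)) (ar : F → ℕ)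
    (lab : Pos) (f : F) : AnnBound (derivS pats ar s lab f) := by
  rintro mo ℓ q hmem p hp
  rcases hmem with (⟨hmem, -⟩ | ⟨mo', ma, hmem, -, -, heq⟩) | ⟨ℓ', i, -, -, heq⟩
  · exact hs mo ℓ q hmem p hp
  · obtain ⟨h1, h2⟩ : mo = reduce mo' (ar f) lab ∧ (ℓ, q) = ma := by
      simpa [Prod.ext_iff] using heq
    subst h1
    obtain ⟨u, hu⟩ := hp
    rcases hu with ⟨humem, -⟩ | ⟨ℓ₁, u₁, i, hℓ₁, -, -, -, hx⟩
    · exact hs mo' ℓ q (h2 ▸ hmem) p ⟨u, humem⟩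
    · obtain ⟨-, rfl⟩ : u = u₁ ∧ p = lab ++ [i] := by simpa [Prod.ext_iff] using hx
      have hlab : below lab q := hs mo' ℓ q (h2 ▸ hmem) lab ⟨ℓ₁, hℓ₁⟩
      obtain ⟨r, hr⟩ := hlab
      exact ⟨r ++ [i], by rw [hr, List.append_assoc]⟩
  · obtain ⟨h1, -, h3⟩ : mo = {(ℓ', lab ++ [i])} ∧ ℓ = ℓ' ∧ q = lab ++ [i] := by
      simpa [Prod.ext_iff] using heq
    subst h1; subst h3
    obtain ⟨u, hu⟩ := hp
    obtain ⟨-, rfl⟩ : u = ℓ' ∧ p = lab ++ [i] := by simpa [Prod.ext_iff] using hu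
    exact below_refl _

lemma annBound_lift {K : St F} {g : Pos} (hK : AnnBound K)
    (hg : ∀ p ∈ posMA K, below p g) : AnnBound (liftSt g K) := by
  rintro mo ℓ q hmem p hp
  obtain ⟨⟨mo₀, ℓ₀, q₀⟩, hxK, hx⟩ := hmem
  obtain ⟨h1, h2, h3⟩ : (fun y : Tm F × Pos => (y.1, y.2.drop g.length)) '' mo₀ = mo ∧
      ℓ₀ = ℓ ∧ q₀.drop g.length = q := by
    simpa [liftGoal, Prod.ext_iff] using hx
  subst h1; subst h3
  obtain ⟨u, hu⟩ := hp
  obtain ⟨⟨u₀, p₀⟩, hp₀, hup⟩ := hu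
  obtain ⟨-, rfl⟩ : u₀ = u ∧ p₀.drop g.length = p := by simpa [Prod.ext_iff] using hup
  have h₁ : below p₀ q₀ := hK mo₀ ℓ₀ q₀ hxK p₀ ⟨u₀, hp₀⟩
  have h₂ : below q₀ g := hg q₀ ⟨mo₀, ℓ₀, hxK⟩
  obtain ⟨r, hr⟩ := h₁
  obtain ⟨t, ht⟩ := h₂
  refine ⟨r, ?_⟩
  rw [hr, ht, List.append_assoc, List.drop_left, List.drop_left]

lemma annBound_reachable (pats : Set (Tm F)) (ar : F → ℕ) (L : St F → Pos) :
    ∀ s, Reachable pats ar L s → AnnBound s := by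
  intro s hs
  induction hs with
  | init => exact annBound_init pats
  | @step s f s' p hr hdelta ih =>
    obtain ⟨K, ⟨g0, hg0, hKeq⟩, hgcp, hlift⟩ := hdelta
    have hKsub : K ⊆ derivS pats ar s (L s) f := by
      rw [hKeq]; exact fun x hx => hx.1
    have hKbound : AnnBound K := fun mo ℓ q h =>
      annBound_deriv ih pats ar (L s) f mo ℓ q (hKsub h)
    rw [show s' = liftSt p K from hlift]
    exact annBound_lift hKbound hgcp.1

/-- Every dependency-equivalence class `K` of the derivative of a reachable
state contains a match goal whose announcement position is `gcp(K)`. -/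
theorem class_has_goal_at_gcp {F : Type} (pats : Set (Tm F)) (ar : F → ℕ)
    (L : St F → Pos) (hpats : pats.Nonempty)
    (hpv : ∀ ℓ ∈ pats, ℓ ≠ Tm.var) (hL : RootLabel pats ar L) :
    ∀ s, Reachable pats ar L s → ∀ (f : F) (K : St F) (g : Pos),
      IsClass (derivS pats ar s (L s) f) K → IsGcp (posMA K) g →
        ∃ (mo : Obl F) (ℓ : Tm F), (mo, (ℓ, g)) ∈ K := by
  intro s hreach f K g hclass hgcp
  classical
  set X := derivS pats ar s (L s) f with hX
  obtain ⟨g0, hg0X, hKdef⟩ := hclass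
  have hXbound : AnnBound X :=
    annBound_deriv (annBound_reachable pats ar L s hreach) pats ar (L s) f
  have hKsub : K ⊆ X := by rw [hKdef]; exact fun x hx => hx.1
  set r : Goal F → Goal F → Prop := fun a b => a ∈ X ∧ b ∈ X ∧ dirDep a b with hr
  have hKmem : ∀ x, x ∈ K ↔ x ∈ X ∧ Relation.ReflTransGen r g0 x := by
    intro x; rw [hKdef]; exact Iff.rfl
  have hg0K : g0 ∈ K := (hKmem g0).2 ⟨hg0X, Relation.ReflTransGen.refl⟩
  have hsymm : Symmetric (Relation.ReflTransGen r) := by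
    refine fun a b h => (@Relation.ReflTransGen.symmetric _ r ⟨?_⟩).symm a b h
    rintro a b ⟨ha, hb, x, hx1, hx2⟩
    exact ⟨hb, ha, x, hx2, hx1⟩
  -- pick a goal `b` in `K` with an announcement position of minimal length
  have hne : ∃ n, ∃ b ∈ K, b.2.2.length = n := ⟨g0.2.2.length, g0, hg0K, rfl⟩
  obtain ⟨b, hbK, hbn⟩ := Nat.find_spec hne
  have hmin : ∀ y ∈ K, Nat.find hne ≤ y.2.2.length := fun y hy =>
    Nat.find_min' hne ⟨y, hy, rfl⟩
  have hXb : ∀ x ∈ X, ∀ p ∈ posOf x.1, below p x.2.2 := fun x hx =>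
    hXbound x.1 x.2.1 x.2.2 hx
  -- key: `b.2.2` is a prefix of every obligation and announcement position in `K`
  have key : ∀ x, Relation.ReflTransGen r b x →
      (∀ p ∈ posOf x.1, below p b.2.2) ∧ below x.2.2 b.2.2 := by
    intro x hrtg
    induction hrtg with
    | refl => exact ⟨hXb b (hKsub hbK), below_refl _⟩
    | @tail c y hbc hcy ih =>
      obtain ⟨hcX, hyX, q, hqc, hqy⟩ := hcy
      have hyK : y ∈ K := (hKmem y).2 ⟨hyX,
        ((hKmem b).1 hbK).2.trans (hbc.tail ⟨hcX, hyX, q, hqc, hqy⟩)⟩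
      have h1 : below q b.2.2 := (ih.1) q hqc
      have h2 : below q y.2.2 := hXb y hyX q hqy
      have h3 : below y.2.2 b.2.2 := by
        rw [below_iff_prefix] at h1 h2 ⊢
        exact List.prefix_of_prefix_length_le h1 h2 (hbn ▸ hmin y hyK)
      exact ⟨fun p hp => below_trans (hXb y hyX p hp) h3, h3⟩
  have hcommon : ∀ p ∈ posMA K, below p b.2.2 := by
    rintro p ⟨mo, ℓ, hmem⟩
    have hrtg : Relation.ReflTransGen r b (mo, (ℓ, p)) :=
      (hsymm ((hKmem b).1 hbK).2).trans ((hKmem _).1 hmem).2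
    exact (key _ hrtg).2
  have hbMA : b.2.2 ∈ posMA K := ⟨b.1, b.2.1, hbK⟩
  have h4 : below b.2.2 g := hgcp.1 b.2.2 hbMA
  have h5 : below g b.2.2 := hgcp.2 b.2.2 hcommon
  have hgb : g = b.2.2 := by
    rw [below_iff_prefix] at h4 h5
    exact (h5.eq_of_length (h5.length_le.antisymm h4.length_le)).symm
  exact ⟨b.1, b.2.1, hgb ▸ hbK⟩
end

section
/- In the evaluation tree ET_M(t) of a closed term t, for every node n=(s,p), the work sets of distinct successors of n are pairwise disjoint. -/
variable {F : Type}

/-! ### Auxiliary lemmas -/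

lemma below_iff {p q : Pos} : below p q ↔ q <+: p := by
  constructor
  · rintro ⟨e, rfl⟩; exact ⟨e, rfl⟩
  · rintro ⟨e, he⟩; exact ⟨e, he.symm⟩

/-- Every obligation position of a goal extends its announcement position. -/
def Inv1 (s : St F) : Prop :=
  ∀ mo ma, (mo, ma) ∈ s → ∀ q ∈ posOf mo, below q ma.2

/-- The obligation positions of a state are pairwise prefix-free. -/
def PF (s : St F) : Prop :=
  ∀ q₁ ∈ posMO s, ∀ q₂ ∈ posMO s, below q₂ q₁ → q₁ = q₂

lemma mem_posMO {s : St F} {q : Pos} :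
    q ∈ posMO s ↔ ∃ g ∈ s, q ∈ posOf g.1 := Iff.rfl

lemma posMO_deriv {pats : Set (Tm F)} {ar : F → ℕ} {s : St F} {lab : Pos} {f : F}
    {q : Pos} (h : q ∈ posMO (derivS pats ar s lab f)) :
    (q ∈ posMO s ∧ q ≠ lab) ∨ ∃ i : ℕ+, q = lab ++ [i] := by
  obtain ⟨g, hg, hq⟩ := h
  rcases hg with (⟨hgs, hlab⟩ | ⟨mo, ma, hmem, _, _, rfl⟩) | ⟨ℓ, i, _, _, rfl⟩
  · exact Or.inl ⟨⟨g, hgs, hq⟩, fun e => hlab (e ▸ hq)⟩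
  · obtain ⟨u, hu⟩ := hq
    rcases hu with ⟨humo, hne⟩ | ⟨ℓ', u', i, hℓ, hi, _, _, hx⟩
    · exact Or.inl ⟨⟨(mo, ma), hmem, u, humo⟩, hne⟩
    · exact Or.inr ⟨i, congrArg Prod.snd hx⟩
  · obtain ⟨u, hu⟩ := hq
    have : (u, q) = (ℓ, lab ++ [i]) := hu
    exact Or.inr ⟨i, congrArg Prod.snd this⟩

lemma Inv1_deriv {pats : Set (Tm F)} {ar : F → ℕ} {s : St F} {lab : Pos} {f : F}
    (hs : Inv1 s) : Inv1 (derivS pats ar s lab f) := by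
  rintro mo' ma hg q hq
  rcases hg with (⟨hgs, _⟩ | ⟨mo, ma', hmem, ⟨ℓ, hℓ, _⟩, _, heq⟩) | ⟨ℓ, i, _, _, heq⟩
  · exact hs mo' ma hgs q hq
  · have hmo : mo' = reduce mo (ar f) lab := congrArg Prod.fst heq
    have hma : ma = ma' := congrArg Prod.snd heq
    rw [hma]
    obtain ⟨u, hu⟩ := hq
    rw [hmo] at hu
    rcases hu with ⟨humo, _⟩ | ⟨ℓ', u', i, hℓ', hi, _, _, hx⟩
    · exact hs mo ma' hmem q ⟨u, humo⟩
    · have hq2 : q = lab ++ [i] := congrArg Prod.snd hx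
      obtain ⟨e, he⟩ := hs mo ma' hmem lab ⟨ℓ', hℓ'⟩
      exact ⟨e ++ [i], by rw [hq2, he, List.append_assoc]⟩
  · have hmo : mo' = {(ℓ, lab ++ [i])} := congrArg Prod.fst heq
    have hma : ma = (ℓ, lab ++ [i]) := congrArg Prod.snd heq
    obtain ⟨u, hu⟩ := hq
    rw [hmo] at hu
    have : (u, q) = (ℓ, lab ++ [i]) := hu
    have hq2 : q = lab ++ [i] := congrArg Prod.snd this
    exact ⟨[], by rw [hq2, hma, List.append_nil]⟩

lemma PF_deriv {pats : Set (Tm F)} {ar : F → ℕ} {s : St F} {lab : Pos} {f : F}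
    (hs : PF s) (hlab : lab ∈ posMO s) : PF (derivS pats ar s lab f) := by
  intro q₁ h₁ q₂ h₂ hbel
  rw [below_iff] at hbel
  rcases posMO_deriv h₁ with ⟨h₁s, h₁ne⟩ | ⟨i, rfl⟩ <;>
    rcases posMO_deriv h₂ with ⟨h₂s, h₂ne⟩ | ⟨j, rfl⟩
  · exact hs q₁ h₁s q₂ h₂s (below_iff.mpr hbel)
  · -- q₁ ∈ posMO s, q₁ <+: lab ++ [j]
    obtain ⟨e, he⟩ := hbel
    rcases List.eq_nil_or_concat e with rfl | ⟨e', a, rfl⟩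
    · rw [List.append_nil] at he; exact he
    · have : q₁ <+: lab := by
        refine ⟨e', ?_⟩
        have h' := he
        rw [List.concat_eq_append, ← List.append_assoc] at h'
        exact List.append_inj_left' h' rfl
      exact absurd (hs q₁ h₁s lab hlab (below_iff.mpr this)) h₁ne
  · -- lab ++ [i] <+: q₂ with q₂ ∈ posMO s, q₂ ≠ lab
    have hlabq : lab <+: q₂ := (List.prefix_append lab [i]).trans hbel
    have : lab = q₂ := hs lab hlab q₂ h₂s (below_iff.mpr hlabq)
    exact absurd this.symm h₂ne
  · exact hbel.eq_of_length (by simp)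

lemma mem_posMO_liftSt {g : Pos} {K : St F} {r : Pos} :
    r ∈ posMO (liftSt g K) ↔ ∃ o ∈ posMO K, r = o.drop g.length := by
  constructor
  · rintro ⟨g', ⟨x, hx, rfl⟩, u, y, hy, hyeq⟩
    exact ⟨y.2, ⟨x, hx, y.1, (by exact hy : (y.1, y.2) ∈ x.1)⟩,
      (congrArg Prod.snd hyeq).symm⟩
  · rintro ⟨o, ⟨x, hx, u, hu⟩, rfl⟩
    exact ⟨liftGoal g x, ⟨x, hx, rfl⟩, u, (u, o), hu, rfl⟩

lemma class_subset {X K : St F} (h : IsClass X K) : K ⊆ X := by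
  obtain ⟨g, _, rfl⟩ := h
  exact fun g' hg' => hg'.1

lemma dirDep_symm : Symmetric (@dirDep F) := by
  rintro a b ⟨x, hx1, hx2⟩; exact ⟨x, hx2, hx1⟩

lemma class_eq {X K₁ K₂ : St F} (h₁ : IsClass X K₁) (h₂ : IsClass X K₂)
    {a b : Goal F} (ha : a ∈ K₁) (hb : b ∈ K₂) (hab : dirDep a b) : K₁ = K₂ := by
  obtain ⟨g₁, hg₁, rfl⟩ := h₁
  obtain ⟨g₂, hg₂, rfl⟩ := h₂
  set R : Goal F → Goal F → Prop := fun a b => a ∈ X ∧ b ∈ X ∧ dirDep a b with hR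
  have hsymm : Symmetric (Relation.ReflTransGen R) :=
    by
      haveI : Std.Symm R := ⟨fun x y ⟨h1, h2, h3⟩ => ⟨h2, h1, dirDep_symm h3⟩⟩
      exact fun a b h => (Relation.ReflTransGen.symmetric (r := R)).symm a b h
  obtain ⟨haX, hg₁a⟩ := ha
  obtain ⟨hbX, hg₂b⟩ := hb
  have h12 : Relation.ReflTransGen R g₁ g₂ :=
    (hg₁a.trans (Relation.ReflTransGen.single ⟨haX, hbX, hab⟩)).trans (hsymm hg₂b)
  ext g'
  exact ⟨fun ⟨hX, h⟩ => ⟨hX, (hsymm h12).trans h⟩, fun ⟨hX, h⟩ => ⟨hX, h12.trans h⟩⟩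

lemma gcp_unique {P : Set Pos} {g₁ g₂ : Pos} (h₁ : IsGcp P g₁) (h₂ : IsGcp P g₂) :
    g₁ = g₂ := by
  have a := below_iff.mp (h₁.2 g₂ h₂.1)
  have b := below_iff.mp (h₂.2 g₁ h₁.1)
  exact b.eq_of_length (le_antisymm b.length_le a.length_le)

lemma node_reachable {pats : Set (Tm F)} {ar : F → ℕ} {L : St F → Pos} {t : Tm F}
    {s : St F} {p : Pos} (h : Node pats ar L t s p) : Reachable pats ar L s := by
  induction h with
  | root => exact .init
  | step s p f s' p' _ _ hδ ih => exact .step s f s' p' ih hδ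

lemma label_mem_posMO {pats : Set (Tm F)} {ar : F → ℕ} {L : St F → Pos}
    (hL : RootLabel pats ar L) {s : St F} (hs : Reachable pats ar L s) :
    L s ∈ posMO s := by
  obtain ⟨mo, ℓ, hmem, hlab⟩ := hL s hs
  exact ⟨(mo, (ℓ, [])), hmem, hlab⟩

/-- Obligation positions of a class extend the gcp of its announcements. -/
lemma gcp_prefix_posMO {X K : St F} (hK : IsClass X K) (hX : Inv1 X)
    {g : Pos} (hg : IsGcp (posMA K) g) {o : Pos} (ho : o ∈ posMO K) : g <+: o := by
  obtain ⟨x, hx, u, hu⟩ := ho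
  have hma : x.2.2 ∈ posMA K := ⟨x.1, x.2.1, hx⟩
  have h1 : x.2.2 <+: o :=
    below_iff.mp (hX x.1 x.2 (class_subset hK hx) o ⟨u, hu⟩)
  exact (below_iff.mp (hg.1 _ hma)).trans h1

lemma inv_reach {pats : Set (Tm F)} {ar : F → ℕ} {L : St F → Pos}
    (hL : RootLabel pats ar L) :
    ∀ s, Reachable pats ar L s → Inv1 s ∧ PF s := by
  intro s hs
  induction hs with
  | init =>
    constructor
    · rintro mo ma ⟨ℓ, hℓ, heq⟩ q hq
      have hmo : mo = {(ℓ, ([] : Pos))} := congrArg Prod.fst heq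
      have hma : ma = (ℓ, ([] : Pos)) := congrArg Prod.snd heq
      obtain ⟨u, hu⟩ := hq
      rw [hmo] at hu
      have : (u, q) = (ℓ, ([] : Pos)) := hu
      have hq2 : q = [] := congrArg Prod.snd this
      exact ⟨[], by simp [hq2, hma]⟩
    · intro q₁ h₁ q₂ h₂ _
      have e : ∀ q ∈ posMO (initSt pats), q = [] := by
        rintro q ⟨g, ⟨ℓ, hℓ, heq⟩, u, hu⟩
        have hmo : g.1 = {(ℓ, ([] : Pos))} := congrArg Prod.fst heq
        rw [hmo] at hu
        have : (u, q) = (ℓ, ([] : Pos)) := hu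
        exact congrArg Prod.snd this
      rw [e q₁ h₁, e q₂ h₂]
  | step s f s' p' hreach hδ ih =>
    obtain ⟨K, hK, hgcp0, hlift0⟩ := hδ
    have hgcp : IsGcp (posMA K) p' := hgcp0
    have hlift : s' = liftSt p' K := hlift0
    clear hgcp0 hlift0
    have hXinv : Inv1 (derivS pats ar s (L s) f) := Inv1_deriv ih.1
    have hXpf : PF (derivS pats ar s (L s) f) :=
      PF_deriv ih.2 (label_mem_posMO hL hreach)
    have hopre : ∀ o ∈ posMO K, p' <+: o :=
      fun o ho => gcp_prefix_posMO hK hXinv hgcp ho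
    subst hlift
    constructor
    · -- Inv1 of the lifted state
      rintro mo' ma' ⟨x, hx, heq⟩ q hq
      have hmo : mo' = (fun y : Tm F × Pos => (y.1, y.2.drop p'.length)) '' x.1 :=
        (congrArg Prod.fst heq).symm
      have hma : ma' = (x.2.1, x.2.2.drop p'.length) := (congrArg Prod.snd heq).symm
      obtain ⟨u, hu⟩ := hq
      rw [hmo] at hu
      obtain ⟨y, hy, hyeq⟩ := hu
      have hqd : q = y.2.drop p'.length := (congrArg Prod.snd hyeq).symm
      have hxX : x ∈ derivS pats ar s (L s) f := class_subset hK hx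
      obtain ⟨e, he⟩ := hXinv x.1 x.2 hxX y.2 ⟨y.1, (by exact hy : (y.1, y.2) ∈ x.1)⟩
      have hpre : p' <+: x.2.2 :=
        below_iff.mp (hgcp.1 x.2.2 ⟨x.1, x.2.1, hx⟩)
      obtain ⟨d, hd⟩ := hpre
      refine ⟨e, ?_⟩
      rw [hqd, hma, he, ← hd]
      simp [List.drop_append, List.drop_left]
    · -- PF of the lifted state
      intro q₁ h₁ q₂ h₂ hbel
      obtain ⟨o₁, ho₁, rfl⟩ := mem_posMO_liftSt.mp h₁
      obtain ⟨o₂, ho₂, rfl⟩ := mem_posMO_liftSt.mp h₂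
      obtain ⟨c₁, hc₁⟩ := hopre o₁ ho₁
      obtain ⟨c₂, hc₂⟩ := hopre o₂ ho₂
      obtain ⟨e, he⟩ := hbel
      have hd₁ : o₁.drop p'.length = c₁ := by rw [← hc₁, List.drop_left]
      have hd₂ : o₂.drop p'.length = c₂ := by rw [← hc₂, List.drop_left]
      have hce : c₂ = c₁ ++ e := by rw [← hd₁, ← hd₂]; exact he
      have hoo : o₂ = o₁ ++ e := by
        rw [← hc₂, ← hc₁, hce, List.append_assoc]
      have hKsub : posMO K ⊆ posMO (derivS pats ar s (L s) f) :=
        fun o ⟨x, hx, h⟩ => ⟨x, class_subset hK hx, h⟩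
      have : o₁ = o₂ := hXpf o₁ (hKsub ho₁) o₂ (hKsub ho₂) ⟨e, hoo⟩
      rw [this]

/-- In the evaluation tree of a closed term `t`, the work sets of distinct
successors of any node are disjoint. -/
theorem successor_work_disjoint {F : Type} (pats : Set (Tm F))
    (ar : F → ℕ) (L : St F → Pos) (t : Tm F) (hc : Closed t) (hw : WF ar t)
    (hpats : pats.Nonempty) (hWF : ∀ ℓ ∈ pats, WF ar ℓ)
    (hpv : ∀ ℓ ∈ pats, ℓ ≠ Tm.var) (hL : RootLabel pats ar L) :
    ∀ (s : St F) (p : Pos) (s₁ : St F) (q₁ : Pos) (s₂ : St F) (q₂ : Pos),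
      EdgeRel pats ar L t s p s₁ q₁ → EdgeRel pats ar L t s p s₂ q₂ →
      (s₁, q₁) ≠ (s₂, q₂) → Work t s₁ q₁ ∩ Work t s₂ q₂ = ∅ := by
  intro s p s₁ q₁ s₂ q₂ e₁ e₂ hne
  obtain ⟨hnode, f₁, p₁', ⟨v₁, hv₁, hf₁⟩, hδ₁, rfl⟩ := e₁
  obtain ⟨_, f₂, p₂', ⟨v₂, hv₂, hf₂⟩, hδ₂, rfl⟩ := e₂
  have hvv : v₁ = v₂ := Option.some.inj (hv₁.symm.trans hv₂)
  have hff : f₁ = f₂ := Option.some.inj (by rw [← hf₁, ← hf₂, hvv])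
  subst hff
  obtain ⟨K₁, hK₁, hg₁0, hl₁0⟩ := hδ₁
  obtain ⟨K₂, hK₂, hg₂0, hl₂0⟩ := hδ₂
  have hg₁ : IsGcp (posMA K₁) p₁' := hg₁0
  have hg₂ : IsGcp (posMA K₂) p₂' := hg₂0
  have hl₁ : s₁ = liftSt p₁' K₁ := hl₁0
  have hl₂ : s₂ = liftSt p₂' K₂ := hl₂0
  clear hg₁0 hg₂0 hl₁0 hl₂0
  subst hl₁ hl₂
  have hreach := node_reachable hnode
  obtain ⟨hinv, hpf⟩ := inv_reach hL s hreach
  have hXinv : Inv1 (derivS pats ar s (L s) f₁) := Inv1_deriv hinv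
  have hXpf : PF (derivS pats ar s (L s) f₁) :=
    PF_deriv hpf (label_mem_posMO hL hreach)
  rw [Set.eq_empty_iff_forall_notMem]
  rintro x ⟨⟨qa, hxa, _, r₁, hr₁, ea, hea⟩, ⟨qb, hxb, _, r₂, hr₂, eb, heb⟩⟩
  obtain ⟨o₁, ho₁, rfl⟩ := mem_posMO_liftSt.mp hr₁
  obtain ⟨o₂, ho₂, rfl⟩ := mem_posMO_liftSt.mp hr₂
  obtain ⟨c₁, hc₁⟩ := gcp_prefix_posMO hK₁ hXinv hg₁ ho₁
  obtain ⟨c₂, hc₂⟩ := gcp_prefix_posMO hK₂ hXinv hg₂ ho₂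
  have hd₁ : o₁.drop p₁'.length = c₁ := by rw [← hc₁, List.drop_left]
  have hd₂ : o₂.drop p₂'.length = c₂ := by rw [← hc₂, List.drop_left]
  have hx1 : x = p ++ (o₁ ++ ea) := by
    rw [hxa, hea, hd₁, ← hc₁]; simp [List.append_assoc]
  have hx2 : x = p ++ (o₂ ++ eb) := by
    rw [hxb, heb, hd₂, ← hc₂]; simp [List.append_assoc]
  have hcomp : o₁ ++ ea = o₂ ++ eb :=
    List.append_cancel_left (hx1.symm.trans hx2)
  have hsub₁ : o₁ ∈ posMO (derivS pats ar s (L s) f₁) := by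
    obtain ⟨g, hg, hq⟩ := ho₁; exact ⟨g, class_subset hK₁ hg, hq⟩
  have hsub₂ : o₂ ∈ posMO (derivS pats ar s (L s) f₁) := by
    obtain ⟨g, hg, hq⟩ := ho₂; exact ⟨g, class_subset hK₂ hg, hq⟩
  have hoo : o₁ = o₂ := by
    rcases List.prefix_or_prefix_of_prefix (List.prefix_append o₁ ea)
        (hcomp ▸ List.prefix_append o₂ eb) with h | h
    · exact hXpf o₁ hsub₁ o₂ hsub₂ (below_iff.mpr h)
    · exact (hXpf o₂ hsub₂ o₁ hsub₁ (below_iff.mpr h)).symm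
  obtain ⟨a, haK, u, hu⟩ := ho₁
  obtain ⟨b, hbK, w, hw⟩ := ho₂
  have hdep : dirDep a b := ⟨o₁, ⟨u, hu⟩, ⟨w, hoo ▸ hw⟩⟩
  have hKeq : K₁ = K₂ := class_eq hK₁ hK₂ haK hbK hdep
  have hpp : p₁' = p₂' := gcp_unique hg₁ (hKeq ▸ hg₂)
  exact hne (by rw [hKeq, hpp])
end
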